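/- arXiv:2506.04701 — 4 statements merged into one kernel-verified Lean document; each statement's English description precedes it below -/
import Mathlib

section
/- For α ∈ (0,1), the weight coefficient 1 - ∑_{m=2}^{k+1} |a_m^{(α)}| of the current opinion decreases monotonically in k and converges to α as k → ∞. -/
open Finset Filter Topology

/-- The Grünwald–Letnikov coefficient `a_k^{(α)} = (-1)^k * α(α-1)⋯(α-k+1)/k!`
(with `a_0 = 1`). -/
noncomputable def glCoeff (α : ℝ) (k : ℕ) : ℝ :=
  (-1) ^ k * (∏ i ∈ Finset.range k, (α - (i : ℝ))) / (Nat.factorial k : ℝ)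

noncomputable def bAux (α : ℝ) (n : ℕ) : ℝ :=
  ∏ i ∈ Finset.range n, (1 - α / ((i : ℝ) + 1))

lemma bAux_pos {α : ℝ} (hα : α ∈ Set.Ioo (0:ℝ) 1) (n : ℕ) : 0 < bAux α n := by
  apply Finset.prod_pos
  intro i _
  have h1 : (0:ℝ) < (i:ℝ) + 1 := by positivity
  have h2 : α / ((i:ℝ) + 1) < 1 := by
    rw [div_lt_one h1]
    have : (0:ℝ) ≤ (i:ℝ) := Nat.cast_nonneg i
    linarith [hα.2]
  linarith

lemma bAux_succ (α : ℝ) (n : ℕ) :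
    bAux α (n + 1) = bAux α n * (1 - α / ((n : ℝ) + 1)) := by
  simp [bAux, Finset.prod_range_succ]

lemma glCoeff_succ_eq (α : ℝ) (n : ℕ) :
    glCoeff α (n + 1) = -(α / ((n : ℝ) + 1)) * bAux α n := by
  induction n with
  | zero => simp [glCoeff, bAux]
  | succ n ih =>
    have hfac : ((Nat.factorial (n+1) : ℝ)) ≠ 0 := by positivity
    have hn1 : ((n:ℝ) + 1) ≠ 0 := by positivity
    have hn2 : ((n:ℝ) + 2) ≠ 0 := by positivity
    have hstep : glCoeff α (n + 2) = glCoeff α (n+1) * (-(α - ((n:ℝ)+1)) / ((n:ℝ)+2)) := by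
      simp only [glCoeff, Finset.prod_range_succ, pow_succ, Nat.factorial_succ]
      push_cast
      field_simp
      ring
    rw [hstep, ih, bAux_succ]
    push_cast
    field_simp
    ring

lemma abs_glCoeff {α : ℝ} (hα : α ∈ Set.Ioo (0:ℝ) 1) (n : ℕ) :
    |glCoeff α (n + 1)| = bAux α n - bAux α (n + 1) := by
  have hpos : 0 < α / ((n:ℝ)+1) * bAux α n := by
    have h1 := bAux_pos hα n
    have h2 := hα.1
    positivity
  rw [glCoeff_succ_eq, bAux_succ]
  rw [neg_mul, abs_neg, abs_of_pos hpos]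
  ring

lemma key_eq {α : ℝ} (hα : α ∈ Set.Ioo (0:ℝ) 1) (k : ℕ) :
    1 - ∑ m ∈ Finset.Icc 2 (k + 1), |glCoeff α m| = α + bAux α (k + 1) := by
  have hsum : ∑ m ∈ Finset.Icc 2 (k + 1), |glCoeff α m|
      = ∑ i ∈ Finset.range k, |glCoeff α (i + 2)| := by
    rw [show Finset.Icc 2 (k+1) = Finset.Ico 2 (k+2) by exact (Finset.Ico_add_one_right_eq_Icc (a := 2) (b := k + 1)).symm,
      Finset.sum_Ico_eq_sum_range]
    simp only [show k + 2 - 2 = k from rfl]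
    apply Finset.sum_congr rfl
    intro i _
    rw [Nat.add_comm]
  rw [hsum]
  have htel : ∑ i ∈ Finset.range k, |glCoeff α (i + 2)|
      = bAux α 1 - bAux α (k + 1) := by
    have h : ∀ i ∈ Finset.range k,
        |glCoeff α (i + 2)| = bAux α (i + 1) - bAux α (i + 2) := by
      intro i _
      exact abs_glCoeff hα (i + 1)
    rw [Finset.sum_congr rfl h]
    exact Finset.sum_range_sub' (fun i => bAux α (i + 1)) k
  rw [htel]
  have hb1 : bAux α 1 = 1 - α := by simp [bAux]
  rw [hb1]; ring

theorem weight_antitone_tendsto_alpha (α : ℝ) (hα : α ∈ Set.Ioo (0:ℝ) 1) :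
    (Antitone fun k : ℕ => 1 - ∑ m ∈ Finset.Icc 2 (k + 1), |glCoeff α m|) ∧
      Filter.Tendsto (fun k : ℕ => 1 - ∑ m ∈ Finset.Icc 2 (k + 1), |glCoeff α m|)
        Filter.atTop (nhds α) := by
  have heq : (fun k : ℕ => 1 - ∑ m ∈ Finset.Icc 2 (k + 1), |glCoeff α m|)
      = fun k : ℕ => α + bAux α (k + 1) := by
    funext k; exact key_eq hα k
  have hanti : Antitone fun n : ℕ => bAux α n := by
    apply antitone_nat_of_succ_le
    intro n
    rw [bAux_succ]
    have hb := (bAux_pos hα n).le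
    have h1 : 1 - α / ((n:ℝ)+1) ≤ 1 := by
      have h0 : 0 ≤ α / ((n:ℝ)+1) := div_nonneg hα.1.le (by positivity)
      linarith
    calc bAux α n * (1 - α / ((n:ℝ)+1)) ≤ bAux α n * 1 :=
          mul_le_mul_of_nonneg_left h1 hb
      _ = bAux α n := mul_one _
  constructor
  · rw [heq]
    intro a b hab
    have := hanti (Nat.succ_le_succ hab)
    simpa using add_le_add_left this α
  · rw [heq]
    have hb0 : Tendsto (fun n : ℕ => bAux α n) atTop (nhds 0) := by
      have hub : ∀ n, bAux α n ≤ Real.exp (-(α * ∑ i ∈ Finset.range n, 1 / ((i:ℝ) + 1))) := by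
        intro n
        have hle : bAux α n ≤ ∏ i ∈ Finset.range n, Real.exp (-(α / ((i:ℝ)+1))) := by
          apply Finset.prod_le_prod
          · intro i _
            have h1 : (0:ℝ) < (i:ℝ) + 1 := by positivity
            have h2 : α / ((i:ℝ) + 1) < 1 := by
              rw [div_lt_one h1]
              have : (0:ℝ) ≤ (i:ℝ) := Nat.cast_nonneg i
              linarith [hα.2]
            linarith
          · intro i _
            have := Real.add_one_le_exp (-(α / ((i:ℝ)+1)))
            linarith
        have harg : -(α * ∑ i ∈ Finset.range n, 1 / ((i:ℝ) + 1))
            = ∑ i ∈ Finset.range n, -(α / ((i:ℝ)+1)) := by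
          rw [Finset.mul_sum, ← Finset.sum_neg_distrib]
          exact Finset.sum_congr rfl (fun i _ => by rw [mul_one_div])
        rw [harg, Real.exp_sum]
        exact hle
      have hH : Tendsto (fun n : ℕ => ∑ i ∈ Finset.range n, 1 / ((i:ℝ) + 1)) atTop atTop := by
        have h := Real.tendsto_sum_range_one_div_nat_succ_atTop
        exact h
      have hexp : Tendsto (fun n : ℕ =>
          Real.exp (-(α * ∑ i ∈ Finset.range n, 1 / ((i:ℝ) + 1)))) atTop (nhds 0) := by
        apply Real.tendsto_exp_atBot.comp
        apply tendsto_neg_atTop_atBot.comp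
        exact hH.const_mul_atTop hα.1
      exact tendsto_of_tendsto_of_tendsto_of_le_of_le tendsto_const_nhds hexp
        (fun n => (bAux_pos hα n).le) hub
    have hlim : Tendsto (fun k : ℕ => α + bAux α (k + 1)) atTop (nhds (α + 0)) :=
      (tendsto_const_nhds.add (hb0.comp (tendsto_add_atTop_nat 1)))
    simpa using hlim
end

section
/- In the fractional-order HK model with opinions initially in [0,1], all opinions remain in [0,1] for every time step k ≥ 0. -/
open Finset Filter Topology

/-- Neighbor set of agent `i` at time `k` (includes `i` itself). -/
noncomputable def nbr {n : ℕ} (ε : ℝ) (x : ℕ → Fin n → ℝ) (k : ℕ) (i : Fin n) :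
    Finset (Fin n) :=
  Finset.univ.filter (fun j => |x k i - x k j| ≤ ε)

/-- The fractional-order Hegselmann–Krause dynamics. -/
def IsFracHK {n : ℕ} (ε α : ℝ) (x : ℕ → Fin n → ℝ) : Prop :=
  ∀ k i,
    x (k + 1) i =
      (∑ j ∈ (nbr ε x k i).erase i, x k j) / ((nbr ε x k i).card : ℝ) +
        (1 / ((nbr ε x k i).card : ℝ)) *
          ((∑ s ∈ Finset.range k, |glCoeff α (k + 1 - s)| * x s i) +
            (1 - ∑ s ∈ Finset.range k, |glCoeff α (k + 1 - s)|) * x k i)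

noncomputable def eCoef (α : ℝ) (N : ℕ) : ℝ :=
  ∏ i ∈ Finset.range N, (((i : ℝ) + 1 - α) / ((i : ℝ) + 1))

lemma eCoef_nonneg {α : ℝ} (hα : α ≤ 1) (N : ℕ) : 0 ≤ eCoef α N := by
  apply Finset.prod_nonneg
  intro i _
  apply div_nonneg
  · have h : (0:ℝ) ≤ (i:ℝ) := Nat.cast_nonneg i
    linarith
  · positivity

lemma eCoef_succ (α : ℝ) (N : ℕ) :
    eCoef α (N + 1) = eCoef α N * (((N : ℝ) + 1 - α) / ((N : ℝ) + 1)) := by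
  rw [eCoef, Finset.prod_range_succ]; rfl

lemma glCoeff_succ_succ (α : ℝ) (N : ℕ) :
    glCoeff α (N + 2) = glCoeff α (N + 1) * ((((N : ℝ) + 1) - α) / ((N : ℝ) + 2)) := by
  unfold glCoeff
  rw [Finset.prod_range_succ]
  rw [Nat.factorial_succ (N + 1)]
  have h1 : ((N + 1).factorial : ℝ) ≠ 0 := Nat.cast_ne_zero.mpr (Nat.factorial_ne_zero _)
  have h2 : ((N:ℝ)+2) ≠ 0 := by positivity
  push_cast
  field_simp
  ring

lemma abs_glCoeff_succ {α : ℝ} (hα : α ∈ Set.Ioo (0:ℝ) 1) (N : ℕ) :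
    |glCoeff α (N + 1)| = α * eCoef α N / ((N : ℝ) + 1) := by
  induction N with
  | zero =>
    simp [glCoeff, eCoef, abs_of_pos hα.1]
  | succ N ih =>
    rw [glCoeff_succ_succ, abs_mul, ih, eCoef_succ]
    have h0 : (0:ℝ) ≤ (N:ℝ) := Nat.cast_nonneg N
    have h1 : (0:ℝ) < (N:ℝ) + 1 - α := by linarith [hα.2]
    have h2 : (0:ℝ) < (N:ℝ) + 2 := by positivity
    rw [abs_of_pos (div_pos h1 h2)]
    field_simp
    push_cast; ring

lemma sum_abs_glCoeff {α : ℝ} (hα : α ∈ Set.Ioo (0:ℝ) 1) (N : ℕ) :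
    ∑ j ∈ Finset.range N, |glCoeff α (j + 1)| = 1 - eCoef α N := by
  induction N with
  | zero => simp [eCoef]
  | succ N ih =>
    rw [Finset.sum_range_succ, ih, abs_glCoeff_succ hα, eCoef_succ]
    have h2 : ((N:ℝ) + 1) ≠ 0 := by positivity
    field_simp
    ring

lemma sum_abs_glCoeff_shift {α : ℝ} (hα : α ∈ Set.Ioo (0:ℝ) 1) (k : ℕ) :
    ∑ s ∈ Finset.range k, |glCoeff α (k + 1 - s)| ≤ 1 - α := by
  have h1 : ∑ s ∈ Finset.range k, |glCoeff α (k + 1 - s)|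
      = ∑ j ∈ Finset.range k, |glCoeff α (j + 2)| := by
    rw [← Finset.sum_range_reflect (fun j => |glCoeff α (j + 2)|) k]
    apply Finset.sum_congr rfl
    intro s hs
    rw [Finset.mem_range] at hs
    congr 2
    omega
  have h2 := Finset.sum_range_succ' (fun j => |glCoeff α (j + 1)|) k
  have h3 := sum_abs_glCoeff hα (k + 1)
  have h4 : |glCoeff α (0 + 1)| = α := by
    norm_num [glCoeff, abs_of_pos hα.1]
  have h5 := eCoef_nonneg (le_of_lt hα.2) (k + 1)
  have h6 : ∑ j ∈ Finset.range k, |glCoeff α (j + 1 + 1)|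
      = ∑ j ∈ Finset.range k, |glCoeff α (j + 2)| := by
    apply Finset.sum_congr rfl; intro j _; norm_num
  rw [h6, h4] at h2
  rw [h1]
  linarith [h2, h3, h5]

theorem fracHK_opinions_stay_in_unit {n : ℕ} (ε α : ℝ) (hε : ε ∈ Set.Ioc (0:ℝ) 1)
    (hα : α ∈ Set.Ioo (0:ℝ) 1) (x : ℕ → Fin n → ℝ)
    (hx0 : ∀ i, x 0 i ∈ Set.Icc (0:ℝ) 1) (hdyn : IsFracHK ε α x) :
    ∀ k (i : Fin n), x k i ∈ Set.Icc (0:ℝ) 1 := by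
  intro k
  induction k using Nat.strong_induction_on with
  | _ k ih =>
  match k with
  | 0 => exact hx0
  | Nat.succ k =>
    intro i
    have hmem : i ∈ nbr ε x k i := by
      simp only [nbr, Finset.mem_filter, Finset.mem_univ, true_and, sub_self, abs_zero]
      exact le_of_lt hε.1
    set N := (nbr ε x k i).card with hN
    have hNpos : 0 < N := Finset.card_pos.mpr ⟨i, hmem⟩
    have hNR : (0:ℝ) < (N:ℝ) := by exact_mod_cast hNpos
    set A := ∑ j ∈ (nbr ε x k i).erase i, x k j with hA
    set S := ∑ s ∈ Finset.range k, |glCoeff α (k + 1 - s)| with hS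
    set B := (∑ s ∈ Finset.range k, |glCoeff α (k + 1 - s)| * x s i) + (1 - S) * x k i with hB
    have hxk := ih k (Nat.lt_succ_self k)
    have hA0 : 0 ≤ A := Finset.sum_nonneg fun j _ => (hxk j).1
    have hA1 : A ≤ (N:ℝ) - 1 := by
      have : A ≤ ∑ _j ∈ (nbr ε x k i).erase i, (1:ℝ) :=
        Finset.sum_le_sum fun j _ => (hxk j).2
      have hc : ((nbr ε x k i).erase i).card = N - 1 := Finset.card_erase_of_mem hmem
      have hcast : (((N : ℕ) - 1 : ℕ) : ℝ) = (N:ℝ) - 1 := by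
        push_cast [Nat.cast_sub hNpos]; ring
      simpa [hc, hcast] using this
    have hS0 : 0 ≤ S := Finset.sum_nonneg fun s _ => abs_nonneg _
    have hS1 : S ≤ 1 - α := sum_abs_glCoeff_shift hα k
    have hB0 : 0 ≤ B := by
      apply add_nonneg
      · exact Finset.sum_nonneg fun s hs =>
          mul_nonneg (abs_nonneg _) ((ih s (Nat.lt_succ_of_lt (Finset.mem_range.mp hs)) i).1)
      · exact mul_nonneg (by linarith [hα.1]) (hxk i).1
    have hB1 : B ≤ 1 := by
      have h1 : (∑ s ∈ Finset.range k, |glCoeff α (k + 1 - s)| * x s i) ≤ S := by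
        rw [hS]
        apply Finset.sum_le_sum
        intro s hs
        have := (ih s (Nat.lt_succ_of_lt (Finset.mem_range.mp hs)) i).2
        nlinarith [abs_nonneg (glCoeff α (k + 1 - s))]
      have h2 : (1 - S) * x k i ≤ 1 - S := by
        nlinarith [(hxk i).2, hα.1]
      linarith
    rw [hdyn k i]
    have heq : A / (N:ℝ) + (1 / (N:ℝ)) * B = (A + B) / (N:ℝ) := by ring
    rw [show (∑ j ∈ (nbr ε x k i).erase i, x k j) / ((nbr ε x k i).card : ℝ) +
        (1 / ((nbr ε x k i).card : ℝ)) *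
          ((∑ s ∈ Finset.range k, |glCoeff α (k + 1 - s)| * x s i) +
            (1 - ∑ s ∈ Finset.range k, |glCoeff α (k + 1 - s)|) * x k i)
        = (A + B) / (N:ℝ) from heq]
    constructor
    · exact div_nonneg (by linarith) (le_of_lt hNR)
    · rw [div_le_one hNR]; linarith
end

section
/- In the fractional-order HK model, the maximum opinion never exceeds its initial value: if x_M(k) = max_i x_i(k), then x_M(k) ≤ x_M(0) for all k ≥ 0. -/
open Finset Filter Topology

lemma glCoeff_zero (α : ℝ) : glCoeff α 0 = 1 := by simp [glCoeff]

lemma glCoeff_succ (β : ℝ) (m : ℕ) :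
    glCoeff β (m + 1) = glCoeff β m * (((m : ℝ) - β) / ((m : ℝ) + 1)) := by
  have hm : (m.factorial : ℝ) ≠ 0 := by exact_mod_cast m.factorial_ne_zero
  have hm1 : ((m : ℝ) + 1) ≠ 0 := by positivity
  simp only [glCoeff, Finset.prod_range_succ, Nat.factorial_succ, pow_succ]
  push_cast
  field_simp
  ring

lemma glCoeff_one (α : ℝ) : glCoeff α 1 = -α := by
  have := glCoeff_succ α 0
  simp [glCoeff_zero] at this
  simpa using this

lemma glCoeff_shift (α : ℝ) (m : ℕ) :
    glCoeff α (m + 1) = glCoeff (α - 1) m * (-α / ((m : ℝ) + 1)) := by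
  have hm : (m.factorial : ℝ) ≠ 0 := by exact_mod_cast m.factorial_ne_zero
  have hm1 : ((m : ℝ) + 1) ≠ 0 := by positivity
  have hprod : ∏ i ∈ Finset.range (m + 1), (α - (i : ℝ)) =
      (∏ i ∈ Finset.range m, ((α - 1) - (i : ℝ))) * α := by
    rw [Finset.prod_range_succ']
    congr 1
    · apply Finset.prod_congr rfl
      intro j _
      push_cast
      ring
    · simp
  simp only [glCoeff, hprod, Nat.factorial_succ, pow_succ]
  push_cast
  field_simp

lemma glCoeff_sum (α : ℝ) :
    ∀ m, ∑ j ∈ Finset.range (m + 1), glCoeff α j = glCoeff (α - 1) m := by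
  intro m
  induction m with
  | zero => simp [glCoeff]
  | succ m ih =>
    rw [Finset.sum_range_succ, ih, glCoeff_shift, glCoeff_succ]
    have h1 : ((m : ℝ) + 1) ≠ 0 := by positivity
    field_simp
    ring

lemma glCoeff_sub_one_nonneg (α : ℝ) (hα : α < 1) : ∀ m, 0 ≤ glCoeff (α - 1) m := by
  intro m
  induction m with
  | zero => simp [glCoeff]
  | succ m ih =>
    rw [glCoeff_succ]
    apply mul_nonneg ih
    apply div_nonneg
    · have : (0:ℝ) ≤ (m:ℝ) := Nat.cast_nonneg m
      linarith
    · positivity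

lemma glCoeff_nonpos (α : ℝ) (h0 : 0 ≤ α) (h1 : α ≤ 1) : ∀ j, glCoeff α (j + 1) ≤ 0 := by
  intro j
  induction j with
  | zero => rw [glCoeff_one]; linarith
  | succ j ih =>
    rw [glCoeff_succ]
    apply mul_nonpos_iff.2 (Or.inr ⟨ih, ?_⟩)
    apply div_nonneg
    · have : (0:ℝ) ≤ (j:ℝ) := Nat.cast_nonneg j
      push_cast
      linarith
    · positivity

lemma weight_sum_le (α : ℝ) (h0 : 0 < α) (h1 : α < 1) (k : ℕ) :
    ∑ s ∈ Finset.range k, |glCoeff α (k + 1 - s)| ≤ 1 := by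
  have habs : ∀ s ∈ Finset.range k, |glCoeff α (k + 1 - s)| = -glCoeff α (k + 1 - s) := by
    intro s hs
    rw [Finset.mem_range] at hs
    have hk : k + 1 - s = (k - s) + 1 := by omega
    rw [hk, abs_of_nonpos (glCoeff_nonpos α h0.le h1.le _)]
  rw [Finset.sum_congr rfl habs]
  have hre : ∑ s ∈ Finset.range k, glCoeff α (k + 1 - s)
      = ∑ j ∈ Finset.range k, glCoeff α (j + 2) := by
    rw [← Finset.sum_range_reflect (fun j => glCoeff α (j + 2)) k]
    apply Finset.sum_congr rfl
    intro j hj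
    rw [Finset.mem_range] at hj
    congr 1
    omega
  have hsplit : ∑ j ∈ Finset.range (k + 2), glCoeff α j
      = ∑ j ∈ Finset.range k, glCoeff α (j + 2) + (1 - α) := by
    rw [Finset.sum_range_succ', Finset.sum_range_succ']
    norm_num [glCoeff_one, glCoeff_zero]
    ring
  have hsum : ∑ j ∈ Finset.range (k + 2), glCoeff α j = glCoeff (α - 1) (k + 1) :=
    glCoeff_sum α (k + 1)
  have hnn : 0 ≤ glCoeff (α - 1) (k + 1) := glCoeff_sub_one_nonneg α h1 (k + 1)
  rw [Finset.sum_neg_distrib, hre]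
  have : ∑ j ∈ Finset.range k, glCoeff α (j + 2) = glCoeff (α - 1) (k + 1) - (1 - α) := by
    linarith [hsplit, hsum]
  rw [this]
  linarith

theorem fracHK_max_le_initial {n : ℕ} (hn : 0 < n) (ε α : ℝ)
    (hε : ε ∈ Set.Ioc (0:ℝ) 1) (hα : α ∈ Set.Ioo (0:ℝ) 1)
    (x : ℕ → Fin n → ℝ) (hx0 : ∀ i, x 0 i ∈ Set.Icc (0:ℝ) 1)
    (hdyn : IsFracHK ε α x) :
    ∀ k, (Finset.univ.sup' (Finset.univ_nonempty_iff.2 ⟨⟨0, hn⟩⟩) (x k)) ≤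
      Finset.univ.sup' (Finset.univ_nonempty_iff.2 ⟨⟨0, hn⟩⟩) (x 0) := by
  set M := Finset.univ.sup' (Finset.univ_nonempty_iff.2 ⟨⟨0, hn⟩⟩) (x 0) with hMdef
  have hM0 : ∀ i, x 0 i ≤ M := fun i => Finset.le_sup' _ (Finset.mem_univ i)
  have key : ∀ k i, x k i ≤ M := by
    intro k
    induction k using Nat.strong_induction_on with
    | _ k ih =>
      obtain _ | k := k
      · exact hM0
      · intro i
        rw [hdyn k i]
        have hi : i ∈ nbr ε x k i := by
          simp only [nbr, Finset.mem_filter, Finset.mem_univ, true_and, sub_self, abs_zero]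
          exact hε.1.le
        have hc1 : 1 ≤ (nbr ε x k i).card := Finset.card_pos.2 ⟨i, hi⟩
        set c : ℝ := ((nbr ε x k i).card : ℝ) with hcdef
        have hcR : (0:ℝ) < c := by rw [hcdef]; exact_mod_cast hc1
        set W := ∑ s ∈ Finset.range k, |glCoeff α (k + 1 - s)| with hW
        have hW0 : 0 ≤ W := Finset.sum_nonneg fun _ _ => abs_nonneg _
        have hW1 : W ≤ 1 := weight_sum_le α hα.1 hα.2 k
        have h1 : ∑ j ∈ (nbr ε x k i).erase i, x k j ≤ (c - 1) * M := by
          calc ∑ j ∈ (nbr ε x k i).erase i, x k j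
              ≤ ∑ _j ∈ (nbr ε x k i).erase i, M :=
                Finset.sum_le_sum fun j _ => ih k (Nat.lt_succ_self k) j
            _ = (((nbr ε x k i).erase i).card : ℝ) * M := by
                rw [Finset.sum_const, nsmul_eq_mul]
            _ = (c - 1) * M := by
                rw [Finset.card_erase_of_mem hi, Nat.cast_sub hc1]
                norm_num
                exact Or.inl hcdef.symm
        have h2 : ∑ s ∈ Finset.range k, |glCoeff α (k + 1 - s)| * x s i ≤ W * M := by
          calc ∑ s ∈ Finset.range k, |glCoeff α (k + 1 - s)| * x s i
              ≤ ∑ s ∈ Finset.range k, |glCoeff α (k + 1 - s)| * M :=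
                Finset.sum_le_sum fun s hs =>
                  mul_le_mul_of_nonneg_left
                    (ih s (Nat.lt_succ_of_lt (Finset.mem_range.1 hs)) i) (abs_nonneg _)
            _ = W * M := by rw [hW, Finset.sum_mul]
        have h3 : (1 - W) * x k i ≤ (1 - W) * M :=
          mul_le_mul_of_nonneg_left (ih k (Nat.lt_succ_self k) i) (by linarith)
        have hinner : (∑ s ∈ Finset.range k, |glCoeff α (k + 1 - s)| * x s i)
            + (1 - W) * x k i ≤ M := by
          have : W * M + (1 - W) * M = M := by ring
          linarith
        calc (∑ j ∈ (nbr ε x k i).erase i, x k j) / c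
              + (1 / c) * ((∑ s ∈ Finset.range k, |glCoeff α (k + 1 - s)| * x s i)
                + (1 - W) * x k i)
            ≤ ((c - 1) * M) / c + (1 / c) * M := by
              apply add_le_add
              · exact div_le_div_of_nonneg_right h1 hcR.le |>.trans_eq rfl
              · exact mul_le_mul_of_nonneg_left hinner (by positivity)
          _ = M := by field_simp; ring
  intro k
  apply Finset.sup'_le
  intro i _
  exact key k i
end

section
/- In the fractional-order HK model, the minimum opinion never falls below its initial value: if x_m(k) = min_i x_i(k), then x_m(k) ≥ x_m(0) for all k ≥ 0. -/
open Finset Filter Topology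

lemma gl_rec (β : ℝ) (N : ℕ) :
    glCoeff β (N + 1) = glCoeff β N * (((N : ℝ) - β) / (N + 1)) := by
  unfold glCoeff
  rw [Finset.prod_range_succ, Nat.factorial_succ]
  push_cast
  have h1 : (Nat.factorial N : ℝ) ≠ 0 := Nat.cast_ne_zero.2 (Nat.factorial_ne_zero N)
  have h2 : ((N : ℝ) + 1) ≠ 0 := by positivity
  field_simp
  ring

lemma gl_step (α : ℝ) (N : ℕ) :
    glCoeff α (N + 1) = -(α / (N + 1)) * glCoeff (α - 1) N := by
  unfold glCoeff
  rw [Finset.prod_range_succ', Nat.factorial_succ]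
  push_cast
  have h1 : (Nat.factorial N : ℝ) ≠ 0 := Nat.cast_ne_zero.2 (Nat.factorial_ne_zero N)
  have h2 : ((N : ℝ) + 1) ≠ 0 := by positivity
  have h3 : ∀ i ∈ Finset.range N, (α - ((i:ℝ)+1)) = (α - 1 - (i:ℝ)) := by
    intro i _; ring
  rw [Finset.prod_congr rfl h3]
  field_simp
  ring

lemma gl_nonpos {α : ℝ} (hα : α ∈ Set.Ioo (0:ℝ) 1) {j : ℕ} (hj : 1 ≤ j) :
    glCoeff α j ≤ 0 := by
  induction j with
  | zero => omega
  | succ N ih =>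
    rcases Nat.eq_or_lt_of_le hj with h | h
    · have : N = 0 := by omega
      subst this
      simp [glCoeff]
      linarith [hα.1]
    · have hN : 1 ≤ N := by omega
      rw [gl_rec]
      have h1 : (0:ℝ) ≤ ((N : ℝ) - α) / (N + 1) := by
        apply div_nonneg
        · have : (1:ℝ) ≤ (N:ℝ) := by exact_mod_cast hN
          linarith [hα.2]
        · positivity
      exact mul_nonpos_of_nonpos_of_nonneg (ih hN) h1

lemma gl_shift_nonneg {α : ℝ} (hα : α ∈ Set.Ioo (0:ℝ) 1) (N : ℕ) :
    0 ≤ glCoeff (α - 1) N := by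
  induction N with
  | zero => simp [glCoeff]
  | succ N ih =>
    rw [gl_rec]
    apply mul_nonneg ih
    apply div_nonneg
    · have : α ≤ 1 := hα.2.le
      have : (0:ℝ) ≤ (N:ℝ) := Nat.cast_nonneg N
      linarith
    · positivity

lemma gl_sum_eq (α : ℝ) (N : ℕ) :
    ∑ j ∈ Finset.range (N + 1), glCoeff α j = glCoeff (α - 1) N := by
  induction N with
  | zero => simp [glCoeff]
  | succ N ih =>
    rw [Finset.sum_range_succ, ih, gl_step, gl_rec]
    have h2 : ((N:ℝ)+1) ≠ 0 := by positivity
    field_simp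
    ring

lemma gl_abs_sum_le {α : ℝ} (hα : α ∈ Set.Ioo (0:ℝ) 1) (k : ℕ) :
    ∑ s ∈ Finset.range k, |glCoeff α (k + 1 - s)| ≤ 1 := by
  have hre : ∑ s ∈ Finset.range k, |glCoeff α (k + 1 - s)|
      = ∑ j ∈ Finset.range k, |glCoeff α (j + 2)| := by
    rw [← Finset.sum_range_reflect (fun j => |glCoeff α (j + 2)|) k]
    apply Finset.sum_congr rfl
    intro s hs
    have hs' : s < k := Finset.mem_range.1 hs
    congr 2
    omega
  rw [hre]
  have habs : ∀ j, |glCoeff α (j + 2)| = -glCoeff α (j + 2) := by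
    intro j
    exact abs_of_nonpos (gl_nonpos hα (by omega))
  simp_rw [habs]
  rw [Finset.sum_neg_distrib]
  have hsum : ∑ j ∈ Finset.range k, glCoeff α (j + 2)
      = ∑ j ∈ Finset.range (k + 2), glCoeff α j - glCoeff α 0 - glCoeff α 1 := by
    rw [Finset.sum_range_succ' (glCoeff α) (k+1), Finset.sum_range_succ' (fun i => glCoeff α (i+1)) k]
    ring
  rw [hsum, gl_sum_eq]
  have h0 : glCoeff α 0 = 1 := by simp [glCoeff]
  have h1 : glCoeff α 1 = -α := by simp [glCoeff]
  rw [h0, h1]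
  have := gl_shift_nonneg hα (k + 1)
  linarith [hα.1]

theorem fracHK_min_ge_initial {n : ℕ} (hn : 0 < n) (ε α : ℝ)
    (hε : ε ∈ Set.Ioc (0:ℝ) 1) (hα : α ∈ Set.Ioo (0:ℝ) 1)
    (x : ℕ → Fin n → ℝ) (hx0 : ∀ i, x 0 i ∈ Set.Icc (0:ℝ) 1)
    (hdyn : IsFracHK ε α x) :
    ∀ k, Finset.univ.inf' (Finset.univ_nonempty_iff.2 ⟨⟨0, hn⟩⟩) (x 0) ≤
      Finset.univ.inf' (Finset.univ_nonempty_iff.2 ⟨⟨0, hn⟩⟩) (x k) := by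
  set m0 := Finset.univ.inf' (Finset.univ_nonempty_iff.2 ⟨⟨0, hn⟩⟩) (x 0) with hm0
  have key : ∀ k i, m0 ≤ x k i := by
    intro k
    induction k using Nat.strong_induction_on with
    | _ k ih =>
      match k, ih with
      | 0, _ => exact fun i => Finset.inf'_le _ (Finset.mem_univ i)
      | (k+1), ih =>
        intro i
        rw [hdyn k i]
        set N := nbr ε x k i with hN
        have hiN : i ∈ N := by
          simp [hN, nbr]
          linarith [hε.1]
        have hcard : 1 ≤ N.card := Finset.card_pos.2 ⟨i, hiN⟩
        have hc : (1:ℝ) ≤ (N.card : ℝ) := by exact_mod_cast hcard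
        have hc0 : (0:ℝ) < (N.card : ℝ) := by linarith
        set S := ∑ s ∈ Finset.range k, |glCoeff α (k + 1 - s)| with hS
        have hS1 : S ≤ 1 := gl_abs_sum_le hα k
        have hA : ((N.card : ℝ) - 1) * m0 ≤ ∑ j ∈ N.erase i, x k j := by
          have hce : (N.erase i).card = N.card - 1 := Finset.card_erase_of_mem hiN
          have h2 := Finset.card_nsmul_le_sum (N.erase i) (x k) m0
            (fun j _ => ih k (Nat.lt_succ_self k) j)
          rw [hce] at h2
          have hcast : ((N.card - 1 : ℕ) : ℝ) = (N.card : ℝ) - 1 := by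
            rw [Nat.cast_sub hcard]; norm_num
          calc ((N.card : ℝ) - 1) * m0 = ((N.card - 1 : ℕ) : ℝ) * m0 := by rw [hcast]
            _ ≤ ∑ j ∈ N.erase i, x k j := by
                simpa [nsmul_eq_mul] using h2
        have hB : S * m0 ≤ ∑ s ∈ Finset.range k, |glCoeff α (k + 1 - s)| * x s i := by
          rw [hS, Finset.sum_mul]
          apply Finset.sum_le_sum
          intro s hs
          have hsk : s < k + 1 := by
            have := Finset.mem_range.1 hs; omega
          exact mul_le_mul_of_nonneg_left (ih s hsk i) (abs_nonneg _)
        have hC : (1 - S) * m0 ≤ (1 - S) * x k i :=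
          mul_le_mul_of_nonneg_left (ih k (Nat.lt_succ_self k) i) (by linarith)
        have heq : m0 = (((N.card : ℝ) - 1) * m0) / (N.card : ℝ) +
            (1 / (N.card : ℝ)) * (S * m0 + (1 - S) * m0) := by
          field_simp
          ring
        rw [heq]
        exact add_le_add (div_le_div_of_nonneg_right hA hc0.le)
          (mul_le_mul_of_nonneg_left (add_le_add hB hC) (one_div_nonneg.2 hc0.le))
  intro k
  apply Finset.le_inf'
  intro i _
  exact key k i
end
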